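/- arXiv:1409.7471 — 4 statements merged into one kernel-verified Lean document; each statement's English description precedes it below -/
import Mathlib

section
/- Let β, γ, h be positive real numbers and let N be a nonnegative integer. Then the series ∑_{k=N+1}^∞ exp(−β·exp(γ·k·h)) converges and its sum is at most exp(−β·exp(γ·N·h))/(β·γ·h). -/
open Real

/-- For β, γ, h > 0 and N a nonnegative integer, the series
∑_{k=N+1}^∞ exp(−β·exp(γ·k·h)) converges and its sum is at most
exp(−β·exp(γ·N·h))/(β·γ·h). -/
theorem tail_sum_double_exponential_decay (β γ h : ℝ) (hβ : 0 < β) (hγ : 0 < γ) (hh : 0 < h)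
    (N : ℕ) :
    Summable (fun k : ℕ => Real.exp (-β * Real.exp (γ * ((N : ℝ) + 1 + k) * h))) ∧
      ∑' k : ℕ, Real.exp (-β * Real.exp (γ * ((N : ℝ) + 1 + k) * h)) ≤
        Real.exp (-β * Real.exp (γ * N * h)) / (β * γ * h) := by
  have hc : 0 < β * γ * h := by positivity
  set t : ℕ → ℝ := fun k => Real.exp (-β * Real.exp (γ * ((N : ℝ) + 1 + k) * h)) with ht
  set g : ℕ → ℝ := fun k => Real.exp (-β * Real.exp (γ * ((N : ℝ) + k) * h)) / (β * γ * h)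
    with hg
  have key : ∀ k : ℕ, t k ≤ g k - g (k + 1) := by
    intro k
    have hE1 : (1 : ℝ) ≤ Real.exp (γ * ((N : ℝ) + k) * h) := by
      rw [show (1 : ℝ) = Real.exp 0 by simp]
      exact Real.exp_le_exp.mpr (by positivity)
    set E := Real.exp (γ * ((N : ℝ) + k) * h) with hEdef
    have hEnext : Real.exp (γ * ((N : ℝ) + (k + 1 : ℕ)) * h) = E * Real.exp (γ * h) := by
      rw [hEdef, ← Real.exp_add]; push_cast; ring_nf
    have hEcur : Real.exp (γ * ((N : ℝ) + 1 + k) * h) = E * Real.exp (γ * h) := by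
      rw [hEdef, ← Real.exp_add]; ring_nf
    have hxy : -β * E - (-β * (E * Real.exp (γ * h))) = β * E * (Real.exp (γ * h) - 1) := by
      ring
    -- exp x - exp y ≥ exp y * (x - y)
    have hmain : (β * γ * h) * Real.exp (-β * (E * Real.exp (γ * h))) ≤
        Real.exp (-β * E) - Real.exp (-β * (E * Real.exp (γ * h))) := by
      set x := -β * E
      set y := -β * (E * Real.exp (γ * h))
      have h1 : x - y + 1 ≤ Real.exp (x - y) := Real.add_one_le_exp _
      have h2 : Real.exp y * (x - y) ≤ Real.exp x - Real.exp y := by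
        have := mul_le_mul_of_nonneg_left h1 (Real.exp_nonneg y)
        calc Real.exp y * (x - y) = Real.exp y * (x - y + 1) - Real.exp y := by ring
          _ ≤ Real.exp y * Real.exp (x - y) - Real.exp y := by linarith
          _ = Real.exp x - Real.exp y := by rw [← Real.exp_add]; ring_nf
      have h3 : β * γ * h ≤ x - y := by
        have hgh : γ * h + 1 ≤ Real.exp (γ * h) := Real.add_one_le_exp _
        have : β * (γ * h) ≤ β * E * (Real.exp (γ * h) - 1) := by
          have hE0 : 0 < E := Real.exp_pos _
          have h4 : γ * h ≤ Real.exp (γ * h) - 1 := by linarith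
          calc β * (γ * h) = β * 1 * (γ * h) := by ring
            _ ≤ β * E * (Real.exp (γ * h) - 1) := by
                apply mul_le_mul (by nlinarith) h4 (by positivity) (by positivity)
        rw [show x - y = β * E * (Real.exp (γ * h) - 1) by rw [← hxy]]
        linarith [this]
      have h5 : Real.exp y * (β * γ * h) ≤ Real.exp y * (x - y) :=
        mul_le_mul_of_nonneg_left h3 (Real.exp_nonneg y)
      calc (β * γ * h) * Real.exp y = Real.exp y * (β * γ * h) := by ring
        _ ≤ Real.exp x - Real.exp y := le_trans h5 h2
    have : t k = Real.exp (-β * (E * Real.exp (γ * h))) := by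
      rw [ht]; simp only []; rw [hEcur]
    rw [this, hg]
    simp only []
    rw [hEnext, ← hEdef]
    rw [div_sub_div_same, le_div_iff₀ hc]
    linarith [hmain]
  have ht_nonneg : ∀ k, 0 ≤ t k := fun k => Real.exp_nonneg _
  have hpartial : ∀ n : ℕ, ∑ k ∈ Finset.range n, t k ≤ g 0 := by
    intro n
    calc ∑ k ∈ Finset.range n, t k ≤ ∑ k ∈ Finset.range n, (g k - g (k + 1)) :=
          Finset.sum_le_sum fun k _ => key k
      _ = g 0 - g n := Finset.sum_range_sub' g n
      _ ≤ g 0 := by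
          have : 0 ≤ g n := by
            rw [hg]; positivity
          linarith
  have hsum : Summable t := summable_of_sum_range_le ht_nonneg hpartial
  have hg0 : g 0 = Real.exp (-β * Real.exp (γ * N * h)) / (β * γ * h) := by
    rw [hg]; norm_num
  refine ⟨hsum, ?_⟩
  rw [← hg0]
  exact Real.tsum_le_of_sum_range_le ht_nonneg hpartial
end

section
/- For each nonnegative integer N, the (2N+1)×(2N+1) real matrix T indexed by j, k ∈ {−N, …, N} with entries T_{jk} = π²/3 when j = k and T_{jk} = 2(−1)^{j−k}/(j−k)² when j ≠ k is symmetric positive definite. Equivalently, the matrix with entries −sinc''(j−k), where sinc(x) = sin(πx)/(πx) with sinc(0) = 1, is symmetric positive definite. -/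
open Real

open MeasureTheory intervalIntegral Matrix in
lemma cos_pi_int (m : ℤ) : Real.cos (π * m) = (-1 : ℝ) ^ m := by
  simpa [mul_comm] using Real.cos_add_int_mul_pi 0 m

lemma sin_pi_int (m : ℤ) : Real.sin (π * m) = 0 := by
  simpa [mul_comm] using Real.sin_int_mul_pi m

lemma intCosVal (m : ℤ) :
    (∫ t in (0:ℝ)..1, Real.cos (π * m * t)) = if m = 0 then 1 else 0 := by
  rcases eq_or_ne m 0 with hm | hm
  · simp [hm]
  · rw [if_neg hm]
    set a : ℝ := π * m with ha
    have ha0 : a ≠ 0 := mul_ne_zero Real.pi_ne_zero (Int.cast_ne_zero.mpr hm)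
    have key : ∀ t : ℝ, HasDerivAt (fun s => Real.sin (a * s) / a) (Real.cos (a * t)) t := by
      intro t
      have h1 : HasDerivAt (fun s : ℝ => a * s) a t := by
        simpa using (hasDerivAt_id t).const_mul a
      have h2 := ((Real.hasDerivAt_sin (a * t)).comp t h1).div_const a
      have : Real.cos (a * t) * a / a = Real.cos (a * t) := by field_simp
      rwa [this] at h2
    have := intervalIntegral.integral_eq_sub_of_hasDerivAt
      (f := fun s => Real.sin (a * s) / a) (f' := fun t => Real.cos (a * t))
      (fun t _ => key t) ((by fun_prop : Continuous fun t : ℝ => Real.cos (a * t)).intervalIntegrable 0 1)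
    rw [this]
    simp [ha, sin_pi_int]

open MeasureTheory intervalIntegral Matrix in
lemma intT2Cos (m : ℤ) :
    (∫ t in (0:ℝ)..1, t ^ 2 * Real.cos (π * m * t)) =
      if m = 0 then 1/3 else 2 * (-1 : ℝ) ^ m / (π ^ 2 * (m : ℝ) ^ 2) := by
  rcases eq_or_ne m 0 with hm | hm
  · simp [hm]
    norm_num [integral_pow]
  · rw [if_neg hm]
    set a : ℝ := π * m with ha
    have ha0 : a ≠ 0 := mul_ne_zero Real.pi_ne_zero (Int.cast_ne_zero.mpr hm)
    set F : ℝ → ℝ := fun s =>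
      s ^ 2 * Real.sin (a * s) / a + 2 * s * Real.cos (a * s) / a ^ 2
        - 2 * Real.sin (a * s) / a ^ 3 with hF
    have key : ∀ t : ℝ, HasDerivAt F (t ^ 2 * Real.cos (a * t)) t := by
      intro t
      have hid : HasDerivAt (fun s : ℝ => a * s) a t := by
        simpa using (hasDerivAt_id t).const_mul a
      have hs : HasDerivAt (fun s : ℝ => Real.sin (a * s)) (Real.cos (a * t) * a) t :=
        (Real.hasDerivAt_sin (a * t)).comp t hid
      have hc : HasDerivAt (fun s : ℝ => Real.cos (a * s)) (-Real.sin (a * t) * a) t :=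
        (Real.hasDerivAt_cos (a * t)).comp t hid
      have h1 : HasDerivAt (fun s : ℝ => s ^ 2 * Real.sin (a * s))
          ((2 : ℕ) * t ^ 1 * Real.sin (a * t) + t ^ 2 * (Real.cos (a * t) * a)) t :=
        (hasDerivAt_pow 2 t).mul hs
      have h2 : HasDerivAt (fun s : ℝ => 2 * s * Real.cos (a * s))
          (2 * Real.cos (a * t) + 2 * t * (-Real.sin (a * t) * a)) t := by
        have := (((hasDerivAt_id t).const_mul (2:ℝ)).mul hc)
        exact this.congr_deriv (by simp only [id_eq, mul_one])
      have h3 : HasDerivAt (fun s : ℝ => 2 * Real.sin (a * s)) (2 * (Real.cos (a * t) * a)) t :=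
        hs.const_mul 2
      have hsum := ((h1.div_const a).add (h2.div_const (a ^ 2))).sub (h3.div_const (a ^ 3))
      have heq : ((2 : ℕ) * t ^ 1 * Real.sin (a * t) + t ^ 2 * (Real.cos (a * t) * a)) / a
          + (2 * Real.cos (a * t) + 2 * t * (-Real.sin (a * t) * a)) / a ^ 2
          - 2 * (Real.cos (a * t) * a) / a ^ 3 = t ^ 2 * Real.cos (a * t) := by
        field_simp
        ring
      rwa [heq] at hsum
    have hint := intervalIntegral.integral_eq_sub_of_hasDerivAt
      (f := F) (f' := fun t => t ^ 2 * Real.cos (a * t)) (fun t _ => key t)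
      ((by fun_prop : Continuous fun t : ℝ => t ^ 2 * Real.cos (a * t)).intervalIntegrable 0 1)
    rw [hint, hF]
    simp only [mul_one, mul_zero]
    rw [show (a:ℝ) = π * m from ha]
    rw [sin_pi_int, cos_pi_int]
    simp only [Real.sin_zero]
    have hπ : (π : ℝ) ≠ 0 := Real.pi_ne_zero
    have hmr : (m : ℝ) ≠ 0 := Int.cast_ne_zero.mpr hm
    field_simp
    ring

/-- The sinc function: sinc(x) = sin(πx)/(πx) for x ≠ 0, sinc(0) = 1. -/
noncomputable def sinc (x : ℝ) : ℝ := if x = 0 then 1 else Real.sin (π * x) / (π * x)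

section Aux
open MeasureTheory intervalIntegral Matrix

lemma sinc_eq (x : ℝ) : _root_.sinc x = ∫ t in (0:ℝ)..1, Real.cos (π * x * t) := by
  rcases eq_or_ne x 0 with hx | hx
  · simp [_root_.sinc, hx]
  · set a : ℝ := π * x with ha
    have ha0 : a ≠ 0 := mul_ne_zero Real.pi_ne_zero hx
    have key : ∀ t : ℝ, HasDerivAt (fun s => Real.sin (a * s) / a) (Real.cos (a * t)) t := by
      intro t
      have h1 : HasDerivAt (fun s : ℝ => a * s) a t := by
        simpa using (hasDerivAt_id t).const_mul a
      have h2 := ((Real.hasDerivAt_sin (a * t)).comp t h1).div_const a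
      have : Real.cos (a * t) * a / a = Real.cos (a * t) := by field_simp
      rwa [this] at h2
    have hint := intervalIntegral.integral_eq_sub_of_hasDerivAt
      (f := fun s => Real.sin (a * s) / a) (f' := fun t => Real.cos (a * t))
      (fun t _ => key t)
      ((by fun_prop : Continuous fun t : ℝ => Real.cos (a * t)).intervalIntegrable 0 1)
    rw [hint]
    simp [_root_.sinc, hx, ha]

noncomputable def sincD1 (x : ℝ) : ℝ := ∫ t in (0:ℝ)..1, -(π * t) * Real.sin (π * x * t)

lemma hasDerivAt_sinc (x₀ : ℝ) : HasDerivAt _root_.sinc (sincD1 x₀) x₀ := by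
  have main := (intervalIntegral.hasDerivAt_integral_of_dominated_loc_of_deriv_le
      (F := fun (x : ℝ) t => Real.cos (π * x * t))
      (F' := fun (x : ℝ) t => -(π * t) * Real.sin (π * x * t))
      (x₀ := x₀) (a := 0) (b := 1) (bound := fun _ => π) (μ := volume) (s := Metric.ball x₀ 1)
      (Metric.ball_mem_nhds x₀ one_pos)
      (Filter.Eventually.of_forall fun x =>
        ((by fun_prop : Continuous fun t : ℝ => Real.cos (π * x * t)).aestronglyMeasurable))
      ((by fun_prop : Continuous fun t : ℝ => Real.cos (π * x₀ * t)).intervalIntegrable 0 1)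
      ((by fun_prop : Continuous fun t : ℝ => -(π * t) * Real.sin (π * x₀ * t)).aestronglyMeasurable)
      (Filter.Eventually.of_forall fun t ht x _ => by
        rw [Set.uIoc_of_le (by norm_num : (0:ℝ) ≤ 1)] at ht
        have h1 : |Real.sin (π * x * t)| ≤ 1 := Real.abs_sin_le_one _
        have h2 : (0:ℝ) < t := ht.1
        have h3 : t ≤ 1 := ht.2
        rw [Real.norm_eq_abs, abs_mul, abs_neg, abs_mul, abs_of_pos Real.pi_pos,
          abs_of_pos h2]
        have h4 : π * t * |Real.sin (π * x * t)| ≤ π * t :=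
          mul_le_of_le_one_right (by positivity) h1
        have h5 : π * t ≤ π := by nlinarith [Real.pi_pos]
        exact h4.trans h5)
      (intervalIntegrable_const)
      (Filter.Eventually.of_forall fun t _ x _ => by
        have hid : HasDerivAt (fun y : ℝ => π * y * t) (π * t) x := by
          simpa using ((hasDerivAt_id x).const_mul π).mul_const t
        have h := (Real.hasDerivAt_sin (π * x * t)).comp x hid
        have h2 := ((Real.hasDerivAt_cos (π * x * t)).comp x hid)
        have : -Real.sin (π * x * t) * (π * t) = -(π * t) * Real.sin (π * x * t) := by ring
        rwa [this] at h2)).2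
  have : (fun x => ∫ t in (0:ℝ)..1, Real.cos (π * x * t)) = _root_.sinc := by
    funext y; rw [sinc_eq]
  rwa [this] at main

lemma hasDerivAt_sincD1 (x₀ : ℝ) :
    HasDerivAt sincD1 (∫ t in (0:ℝ)..1, -π ^ 2 * (t ^ 2 * Real.cos (π * x₀ * t))) x₀ := by
  exact (intervalIntegral.hasDerivAt_integral_of_dominated_loc_of_deriv_le
      (F := fun (x : ℝ) t => -(π * t) * Real.sin (π * x * t))
      (F' := fun (x : ℝ) t => -π ^ 2 * (t ^ 2 * Real.cos (π * x * t)))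
      (x₀ := x₀) (a := 0) (b := 1) (bound := fun _ => π ^ 2) (μ := volume) (s := Metric.ball x₀ 1)
      (Metric.ball_mem_nhds x₀ one_pos)
      (Filter.Eventually.of_forall fun x =>
        ((by fun_prop : Continuous fun t : ℝ => -(π * t) * Real.sin (π * x * t)).aestronglyMeasurable))
      ((by fun_prop : Continuous fun t : ℝ => -(π * t) * Real.sin (π * x₀ * t)).intervalIntegrable 0 1)
      ((by fun_prop : Continuous fun t : ℝ => -π ^ 2 * (t ^ 2 * Real.cos (π * x₀ * t))).aestronglyMeasurable)
      (Filter.Eventually.of_forall fun t ht x _ => by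
        rw [Set.uIoc_of_le (by norm_num : (0:ℝ) ≤ 1)] at ht
        have h1 : |Real.cos (π * x * t)| ≤ 1 := Real.abs_cos_le_one _
        have h2 : (0:ℝ) < t := ht.1
        have h3 : t ≤ 1 := ht.2
        rw [Real.norm_eq_abs, abs_mul, abs_neg, abs_mul, abs_of_pos (by positivity : (0:ℝ) < π ^ 2),
          abs_of_pos (by positivity : (0:ℝ) < t ^ 2)]
        have h4 : t ^ 2 * |Real.cos (π * x * t)| ≤ t ^ 2 :=
          mul_le_of_le_one_right (by positivity) h1
        have h5 : t ^ 2 ≤ 1 := by nlinarith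
        exact mul_le_of_le_one_right (sq_nonneg π) (h4.trans h5))
      (intervalIntegrable_const)
      (Filter.Eventually.of_forall fun t _ x _ => by
        have hid : HasDerivAt (fun y : ℝ => π * y * t) (π * t) x := by
          simpa using ((hasDerivAt_id x).const_mul π).mul_const t
        have h := ((Real.hasDerivAt_sin (π * x * t)).comp x hid).const_mul (-(π * t))
        have : -(π * t) * (Real.cos (π * x * t) * (π * t)) =
            -π ^ 2 * (t ^ 2 * Real.cos (π * x * t)) := by ring
        rwa [this] at h)).2

lemma iteratedDeriv_two_sinc (y : ℝ) :
    iteratedDeriv 2 _root_.sinc y = -π ^ 2 * ∫ t in (0:ℝ)..1, t ^ 2 * Real.cos (π * y * t) := by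
  rw [iteratedDeriv_succ, iteratedDeriv_one]
  have hd : deriv _root_.sinc = sincD1 := funext fun x => (hasDerivAt_sinc x).deriv
  rw [hd, (hasDerivAt_sincD1 y).deriv, ← intervalIntegral.integral_const_mul]

lemma posDef_aux (n : ℕ) :
    (Matrix.of fun j k : Fin n =>
      π ^ 2 * ∫ t in (0:ℝ)..1,
        t ^ 2 * Real.cos (π * (((j : ℤ) - (k : ℤ) : ℤ) : ℝ) * t)).PosDef := by
  refine Matrix.posDef_iff_dotProduct_mulVec.mpr ⟨?_, ?_⟩
  · unfold Matrix.IsHermitian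
    ext j k
    simp only [Matrix.conjTranspose_apply, Matrix.of_apply, star_trivial]
    congr 1
    apply intervalIntegral.integral_congr
    intro t _
    beta_reduce
    have h : π * (((k : ℤ) - (j : ℤ) : ℤ) : ℝ) * t
        = -(π * (((j : ℤ) - (k : ℤ) : ℤ) : ℝ) * t) := by push_cast; ring
    rw [h, Real.cos_neg]
  · intro x hx
    set f : ℝ → ℝ := fun t => ∑ j, x j * Real.cos (π * (j.val : ℝ) * t) with hf_def
    set g : ℝ → ℝ := fun t => ∑ j, x j * Real.sin (π * (j.val : ℝ) * t) with hg_def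
    have hf : Continuous f := by
      apply continuous_finset_sum; intro j _; fun_prop
    have hg : Continuous g := by
      apply continuous_finset_sum; intro j _; fun_prop
    have hcos : ∀ (j k : Fin n) (t : ℝ),
        Real.cos (π * (((j : ℤ) - (k : ℤ) : ℤ) : ℝ) * t) =
          Real.cos (π * (j.val : ℝ) * t) * Real.cos (π * (k.val : ℝ) * t)
          + Real.sin (π * (j.val : ℝ) * t) * Real.sin (π * (k.val : ℝ) * t) := by
      intro j k t
      rw [← Real.cos_sub]
      congr 1
      push_cast
      ring
    -- the quadratic form equals an integral
    have key : star x ⬝ᵥ ((Matrix.of fun j k : Fin n =>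
        π ^ 2 * ∫ t in (0:ℝ)..1,
          t ^ 2 * Real.cos (π * (((j : ℤ) - (k : ℤ) : ℤ) : ℝ) * t)) *ᵥ x)
        = ∫ t in (0:ℝ)..1, π ^ 2 * t ^ 2 * (f t ^ 2 + g t ^ 2) := by
      have h1 : star x ⬝ᵥ ((Matrix.of fun j k : Fin n =>
          π ^ 2 * ∫ t in (0:ℝ)..1,
            t ^ 2 * Real.cos (π * (((j : ℤ) - (k : ℤ) : ℤ) : ℝ) * t)) *ᵥ x)
          = ∑ j : Fin n, ∑ k : Fin n, x j * ((π ^ 2 * ∫ t in (0:ℝ)..1,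
          t ^ 2 * Real.cos (π * (((j : ℤ) - (k : ℤ) : ℤ) : ℝ) * t)) * x k) := by
        simp [dotProduct, Matrix.mulVec, Finset.mul_sum]
      rw [h1]
      have h2 : ∀ j k : Fin n, x j * ((π ^ 2 * ∫ t in (0:ℝ)..1,
          t ^ 2 * Real.cos (π * (((j : ℤ) - (k : ℤ) : ℤ) : ℝ) * t)) * x k)
          = ∫ t in (0:ℝ)..1, (x j * x k * π ^ 2) *
              (t ^ 2 * Real.cos (π * (((j : ℤ) - (k : ℤ) : ℤ) : ℝ) * t)) := by
        intro j k
        rw [intervalIntegral.integral_const_mul]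
        ring
      calc ∑ j : Fin n, ∑ k : Fin n, x j * ((π ^ 2 * ∫ t in (0:ℝ)..1,
            t ^ 2 * Real.cos (π * (((j : ℤ) - (k : ℤ) : ℤ) : ℝ) * t)) * x k)
          = ∑ j : Fin n, ∫ t in (0:ℝ)..1, ∑ k : Fin n, (x j * x k * π ^ 2) *
              (t ^ 2 * Real.cos (π * (((j : ℤ) - (k : ℤ) : ℤ) : ℝ) * t)) := by
            refine Finset.sum_congr rfl fun j _ => ?_
            rw [intervalIntegral.integral_finset_sum]
            · exact Finset.sum_congr rfl fun k _ => h2 j k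
            · intro k _
              exact (by fun_prop : Continuous fun t : ℝ => (x j * x k * π ^ 2) *
                (t ^ 2 * Real.cos (π * (((j : ℤ) - (k : ℤ) : ℤ) : ℝ) * t))).intervalIntegrable 0 1
        _ = ∫ t in (0:ℝ)..1, ∑ j : Fin n, ∑ k : Fin n, (x j * x k * π ^ 2) *
              (t ^ 2 * Real.cos (π * (((j : ℤ) - (k : ℤ) : ℤ) : ℝ) * t)) := by
            rw [intervalIntegral.integral_finset_sum]
            intro j _
            apply Continuous.intervalIntegrable
            apply continuous_finset_sum
            intro k _
            fun_prop
        _ = ∫ t in (0:ℝ)..1, π ^ 2 * t ^ 2 * (f t ^ 2 + g t ^ 2) := by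
            apply intervalIntegral.integral_congr
            intro t _
            beta_reduce
            have e1 : f t ^ 2 = ∑ j : Fin n, ∑ k : Fin n,
                (x j * Real.cos (π * (j.val : ℝ) * t)) * (x k * Real.cos (π * (k.val : ℝ) * t)) := by
              rw [sq, hf_def, Finset.sum_mul_sum]
            have e2 : g t ^ 2 = ∑ j : Fin n, ∑ k : Fin n,
                (x j * Real.sin (π * (j.val : ℝ) * t)) * (x k * Real.sin (π * (k.val : ℝ) * t)) := by
              rw [sq, hg_def, Finset.sum_mul_sum]
            rw [e1, e2, ← Finset.sum_add_distrib, Finset.mul_sum]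
            refine Finset.sum_congr rfl fun j _ => ?_
            rw [← Finset.sum_add_distrib, Finset.mul_sum]
            refine Finset.sum_congr rfl fun k _ => ?_
            rw [hcos j k t]
            ring
    rw [key]
    have hnn : 0 ≤ ∫ t in (0:ℝ)..1, π ^ 2 * t ^ 2 * (f t ^ 2 + g t ^ 2) := by
      apply intervalIntegral.integral_nonneg (by norm_num)
      intro u _
      positivity
    rcases hnn.lt_or_eq with hpos | heq
    · exact hpos
    -- integral is zero: derive a contradiction
    exfalso
    have hHcont : Continuous fun t : ℝ => π ^ 2 * t ^ 2 * (f t ^ 2 + g t ^ 2) := by fun_prop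
    have hsum0 : ∀ t ∈ Set.Ioo (0:ℝ) 1, f t ^ 2 + g t ^ 2 = 0 := by
      by_contra hcon
      push_neg at hcon
      obtain ⟨t₀, ht₀, hne⟩ := hcon
      have hposval : 0 < f t₀ ^ 2 + g t₀ ^ 2 := lt_of_le_of_ne (by positivity) (Ne.symm hne)
      have hU : IsOpen (Set.Ioo (0:ℝ) 1 ∩ {t | 0 < f t ^ 2 + g t ^ 2}) :=
        isOpen_Ioo.inter (isOpen_lt continuous_const ((hf.pow 2).add (hg.pow 2)))
      have hmem : t₀ ∈ Set.Ioo (0:ℝ) 1 ∩ {t | 0 < f t ^ 2 + g t ^ 2} := ⟨ht₀, hposval⟩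
      have hμ : 0 < volume (Set.Ioo (0:ℝ) 1 ∩ {t | 0 < f t ^ 2 + g t ^ 2}) :=
        hU.measure_pos volume ⟨t₀, hmem⟩
      have hsub : Set.Ioo (0:ℝ) 1 ∩ {t | 0 < f t ^ 2 + g t ^ 2} ⊆
          (Function.support fun t : ℝ => π ^ 2 * t ^ 2 * (f t ^ 2 + g t ^ 2)) ∩ Set.Ioc 0 1 := by
        rintro t ⟨ht, hpt⟩
        refine ⟨?_, ht.1, le_of_lt ht.2⟩
        have : 0 < π ^ 2 * t ^ 2 * (f t ^ 2 + g t ^ 2) := by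
          have h0t : 0 < t := ht.1
          exact mul_pos (by positivity) hpt
        exact ne_of_gt this
      have hlt : 0 < ∫ t in (0:ℝ)..1, π ^ 2 * t ^ 2 * (f t ^ 2 + g t ^ 2) := by
        rw [intervalIntegral.integral_pos_iff_support_of_nonneg_ae'
          (Filter.Eventually.of_forall fun t => by positivity)
          (hHcont.intervalIntegrable 0 1)]
        exact ⟨one_pos, lt_of_lt_of_le hμ (measure_mono hsub)⟩
      rw [← heq] at hlt
      exact lt_irrefl 0 hlt
    have hf0 : Set.EqOn f 0 (Set.Icc 0 1) := by
      have h1 : Set.EqOn f 0 (Set.Ioo 0 1) := by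
        intro t ht
        have := hsum0 t ht
        have h2 : f t ^ 2 = 0 := by nlinarith [sq_nonneg (f t), sq_nonneg (g t)]
        simpa using pow_eq_zero_iff (n := 2) (by norm_num) |>.mp h2
      have := h1.closure hf continuous_const
      rwa [closure_Ioo (by norm_num : (0:ℝ) ≠ 1)] at this
    have hg0 : Set.EqOn g 0 (Set.Icc 0 1) := by
      have h1 : Set.EqOn g 0 (Set.Ioo 0 1) := by
        intro t ht
        have := hsum0 t ht
        have h2 : g t ^ 2 = 0 := by nlinarith [sq_nonneg (f t), sq_nonneg (g t)]
        simpa using pow_eq_zero_iff (n := 2) (by norm_num) |>.mp h2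
      have := h1.closure hg continuous_const
      rwa [closure_Ioo (by norm_num : (0:ℝ) ≠ 1)] at this
    obtain ⟨k, hk⟩ := Function.ne_iff.mp hx
    apply hk
    have hxk : x k = ∫ t in (0:ℝ)..1,
        (f t * Real.cos (π * (k.val : ℝ) * t) + g t * Real.sin (π * (k.val : ℝ) * t)) := by
      have expand : ∀ t : ℝ, f t * Real.cos (π * (k.val : ℝ) * t)
          + g t * Real.sin (π * (k.val : ℝ) * t)
          = ∑ j : Fin n, x j * Real.cos (π * (((j : ℤ) - (k : ℤ) : ℤ) : ℝ) * t) := by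
        intro t
        rw [hf_def, hg_def, Finset.sum_mul, Finset.sum_mul, ← Finset.sum_add_distrib]
        refine Finset.sum_congr rfl fun j _ => ?_
        rw [hcos j k t]
        ring
      have : (∫ t in (0:ℝ)..1,
          (f t * Real.cos (π * (k.val : ℝ) * t) + g t * Real.sin (π * (k.val : ℝ) * t)))
          = ∑ j : Fin n, x j * ∫ t in (0:ℝ)..1,
              Real.cos (π * (((j : ℤ) - (k : ℤ) : ℤ) : ℝ) * t) := by
        rw [intervalIntegral.integral_congr (g :=
          fun t => ∑ j : Fin n, x j * Real.cos (π * (((j : ℤ) - (k : ℤ) : ℤ) : ℝ) * t))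
          (fun t _ => expand t)]
        rw [intervalIntegral.integral_finset_sum]
        · exact Finset.sum_congr rfl fun j _ => intervalIntegral.integral_const_mul _ _
        · intro j _
          exact ((by fun_prop : Continuous fun t : ℝ =>
            x j * Real.cos (π * (((j : ℤ) - (k : ℤ) : ℤ) : ℝ) * t)).intervalIntegrable 0 1)
      rw [this]
      have hval : ∀ j : Fin n, (∫ t in (0:ℝ)..1,
          Real.cos (π * (((j : ℤ) - (k : ℤ) : ℤ) : ℝ) * t)) = if j = k then 1 else 0 := by
        intro j
        rw [intCosVal]
        congr 1
        simp [sub_eq_zero, Fin.val_eq_val]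
      simp only [hval, mul_ite, mul_one, mul_zero]
      simp
    rw [hxk]
    rw [intervalIntegral.integral_congr (g := fun _ => 0)]
    · simp
    · intro t ht
      rw [Set.uIcc_of_le (by norm_num : (0:ℝ) ≤ 1)] at ht
      simp [hf0 ht, hg0 ht]

end Aux

/-- the (2N+1)×(2N+1) matrix with diagonal entries π²/3 and off-diagonal
entries 2(−1)^{j−k}/(j−k)² is symmetric positive definite; equivalently the matrix with
entries −sinc''(j−k) is symmetric positive definite. -/
theorem sinc_second_deriv_matrix_posDef (N : ℕ) :
    (Matrix.of fun j k : Fin (2 * N + 1) =>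
        if j = k then π ^ 2 / 3
        else 2 * (-1 : ℝ) ^ ((j : ℤ) - (k : ℤ)) / (((j : ℤ) - (k : ℤ) : ℤ) : ℝ) ^ 2).PosDef ∧
      (Matrix.of fun j k : Fin (2 * N + 1) =>
        -iteratedDeriv 2 _root_.sinc (((j : ℤ) - (k : ℤ) : ℤ) : ℝ)).PosDef := by
  have h1 : (Matrix.of fun j k : Fin (2 * N + 1) =>
      if j = k then π ^ 2 / 3
      else 2 * (-1 : ℝ) ^ ((j : ℤ) - (k : ℤ)) / (((j : ℤ) - (k : ℤ) : ℤ) : ℝ) ^ 2)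
      = Matrix.of fun j k : Fin (2 * N + 1) =>
        π ^ 2 * ∫ t in (0:ℝ)..1,
          t ^ 2 * Real.cos (π * (((j : ℤ) - (k : ℤ) : ℤ) : ℝ) * t) := by
    ext j k
    simp only [Matrix.of_apply]
    rw [intT2Cos]
    by_cases h : j = k
    · subst h
      rw [if_pos rfl, if_pos (sub_self _)]
      ring
    · have hm : ((j : ℤ) - (k : ℤ)) ≠ 0 := by
        simp only [ne_eq, sub_eq_zero, Int.natCast_inj, Fin.val_eq_val]
        exact h
      rw [if_neg h, if_neg hm]
      have hπ : (π : ℝ) ≠ 0 := Real.pi_ne_zero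
      have hmr : ((((j : ℤ) - (k : ℤ)) : ℤ) : ℝ) ≠ 0 := Int.cast_ne_zero.mpr hm
      rw [mul_div_assoc', mul_div_mul_left _ _ (pow_ne_zero 2 hπ)]
  have h2 : (Matrix.of fun j k : Fin (2 * N + 1) =>
      -iteratedDeriv 2 _root_.sinc (((j : ℤ) - (k : ℤ) : ℤ) : ℝ))
      = Matrix.of fun j k : Fin (2 * N + 1) =>
        π ^ 2 * ∫ t in (0:ℝ)..1,
          t ^ 2 * Real.cos (π * (((j : ℤ) - (k : ℤ) : ℤ) : ℝ) * t) := by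
    ext j k
    simp only [Matrix.of_apply]
    rw [iteratedDeriv_two_sinc]
    ring
  refine ⟨?_, ?_⟩
  · rw [h1]; exact posDef_aux _
  · rw [h2]; exact posDef_aux _
end

section
/- Let m ≥ 1 and let A and B be real symmetric m×m matrices with B positive definite. Assume there is δ > 0 such that xᵀAx ≥ δ⁻¹·xᵀx for every vector x (in particular A is positive definite). Let λ ∈ ℝ, let v be a nonzero vector, and set r = (A − λB)v. Then there exist a real number μ > 0 and a nonzero vector z with Az = μBz such that |μ − λ| ≤ √(δμ) · √m · ‖r‖ / √(vᵀBv), where ‖·‖ is the Euclidean norm. -/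
open Matrix

/-- if A, B are real symmetric m×m matrices (m ≥ 1), B positive definite, and
xᵀAx ≥ δ⁻¹·xᵀx for all x (δ > 0), then for any λ ∈ ℝ and nonzero v, with r = (A − λB)v,
there is a generalized eigenpair Az = μBz with μ > 0, z ≠ 0 and
|μ − λ| ≤ √(δμ)·√m·‖r‖/√(vᵀBv). -/
theorem generalized_eigenvalue_perturbation (m : ℕ) (hm : 1 ≤ m)
    (A B : Matrix (Fin m) (Fin m) ℝ) (hA : A.IsSymm) (hB : B.IsSymm) (hBpd : B.PosDef)
    (δ : ℝ) (hδ : 0 < δ)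
    (hAlb : ∀ x : Fin m → ℝ, δ⁻¹ * (x ⬝ᵥ x) ≤ x ⬝ᵥ A.mulVec x)
    (lam : ℝ) (v : Fin m → ℝ) (hv : v ≠ 0) :
    ∃ μ : ℝ, 0 < μ ∧ ∃ z : Fin m → ℝ, z ≠ 0 ∧ A.mulVec z = μ • B.mulVec z ∧
      |μ - lam| ≤ Real.sqrt (δ * μ) * Real.sqrt m *
          Real.sqrt (((A - lam • B).mulVec v) ⬝ᵥ ((A - lam • B).mulVec v)) /
            Real.sqrt (v ⬝ᵥ B.mulVec v) := by
  classical
  -- symmetric dot product moves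
  have sdot : ∀ (M : Matrix (Fin m) (Fin m) ℝ), M.IsSymm → ∀ x y : Fin m → ℝ,
      x ⬝ᵥ (M *ᵥ y) = (M *ᵥ x) ⬝ᵥ y := by
    intro M hM x y
    rw [Matrix.dotProduct_mulVec, ← Matrix.mulVec_transpose, hM.eq, dotProduct_comm]
  have hAh : A.IsHermitian := by
    rw [Matrix.IsHermitian, Matrix.conjTranspose_eq_transpose_of_trivial]; exact hA
  have hBsd := hBpd.posSemidef
  open scoped MatrixOrder in set S := CFC.sqrt B with hSdef
  have hSh : S.IsHermitian := by
    open scoped MatrixOrder in exact (Matrix.nonneg_iff_posSemidef.mp (CFC.sqrt_nonneg B)).1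
  have hSsym : S.IsSymm := by
    rw [Matrix.IsSymm, ← Matrix.conjTranspose_eq_transpose_of_trivial]; exact hSh
  have hSS : S * S = B := by
    open scoped MatrixOrder in exact CFC.sqrt_mul_sqrt_self B hBsd.nonneg
  have hdet : IsUnit S.det := by
    have hBdet := hBpd.det_pos
    rw [← hSS, Matrix.det_mul] at hBdet
    exact isUnit_iff_ne_zero.mpr (fun h => by simp [h] at hBdet)
  set iS := S⁻¹ with hiSdef
  have hSiS : S * iS = 1 := Matrix.mul_nonsing_inv _ hdet
  have hiSS : iS * S = 1 := Matrix.nonsing_inv_mul _ hdet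
  have hiSh : iS.IsHermitian := hSh.inv
  have hiSsym : iS.IsSymm := by
    rw [Matrix.IsSymm, ← Matrix.conjTranspose_eq_transpose_of_trivial]; exact hiSh
  set C := iS * A * iS with hCdef
  have hCh : C.IsHermitian := by
    show Cᴴ = C
    rw [hCdef, Matrix.conjTranspose_mul, Matrix.conjTranspose_mul, hiSh.eq, hAh.eq, mul_assoc]
  set bas := hCh.eigenvectorBasis with hbas
  set ev := hCh.eigenvalues with hev
  -- inner product on EuclideanSpace is the dot product
  have hinnerdot : ∀ x y : EuclideanSpace ℝ (Fin m),
      inner ℝ x y = (⇑x : Fin m → ℝ) ⬝ᵥ (⇑y : Fin m → ℝ) := by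
    intro x y
    rw [EuclideanSpace.inner_eq_star_dotProduct, dotProduct_comm]; rfl
  set y : Fin m → ℝ := S *ᵥ v with hy
  set c : Fin m → ℝ := fun j => (⇑(bas j) : Fin m → ℝ) ⬝ᵥ y with hc
  have hBv : 0 < v ⬝ᵥ B *ᵥ v := by
    have := hBpd.dotProduct_mulVec_pos hv
    simpa using this
  -- Parseval
  set yE : EuclideanSpace ℝ (Fin m) := (WithLp.equiv 2 (Fin m → ℝ)).symm y with hyE
  have hyEc : (⇑yE : Fin m → ℝ) = y := rfl
  have hpars : ∑ j, c j ^ 2 = v ⬝ᵥ B *ᵥ v := by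
    have h1 := bas.sum_inner_mul_inner yE yE
    have h2 : ∀ j, (inner ℝ yE (bas j) : ℝ) = c j := by
      intro j
      rw [real_inner_comm, hinnerdot]; rfl
    have h3 : (inner ℝ yE yE : ℝ) = y ⬝ᵥ y := by rw [hinnerdot]; rfl
    have h4 : y ⬝ᵥ y = v ⬝ᵥ B *ᵥ v := by
      rw [hy, ← sdot S hSsym v (S *ᵥ v), Matrix.mulVec_mulVec, hSS]
    calc ∑ j, c j ^ 2 = ∑ j, (inner ℝ yE (bas j) : ℝ) * inner ℝ (bas j) yE := by
          refine Finset.sum_congr rfl fun j _ => ?_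
          rw [h2, real_inner_comm, h2, sq]
      _ = inner ℝ yE yE := h1
      _ = v ⬝ᵥ B *ᵥ v := by rw [h3, h4]
  -- pick the index with the largest coefficient
  haveI : Nonempty (Fin m) := ⟨⟨0, hm⟩⟩
  obtain ⟨i, -, hmax⟩ := Finset.exists_max_image Finset.univ (fun j => (c j) ^ 2)
    Finset.univ_nonempty
  have htc : v ⬝ᵥ B *ᵥ v ≤ (m : ℝ) * (c i) ^ 2 := by
    rw [← hpars]
    calc ∑ j, c j ^ 2 ≤ ∑ _j : Fin m, (c i) ^ 2 :=
          Finset.sum_le_sum fun j _ => hmax j (Finset.mem_univ j)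
      _ = (m : ℝ) * (c i) ^ 2 := by simp [mul_comm]
  -- the eigenpair
  set u : Fin m → ℝ := ⇑(bas i) with hu
  set μ : ℝ := ev i with hμ
  set z : Fin m → ℝ := iS *ᵥ u with hz
  have hCu : C *ᵥ u = μ • u := hCh.mulVec_eigenvectorBasis i
  have hSz : S *ᵥ z = u := by
    rw [hz, Matrix.mulVec_mulVec, hSiS, Matrix.one_mulVec]
  have hBz : B *ᵥ z = S *ᵥ u := by
    rw [hz, Matrix.mulVec_mulVec, ← hSS, mul_assoc, hSiS, mul_one]
  have hAz : A *ᵥ z = μ • (S *ᵥ u) := by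
    have hAiS : A * iS = S * C := by
      rw [hCdef, ← mul_assoc, ← mul_assoc, hSiS, one_mul]
    rw [hz, Matrix.mulVec_mulVec, hAiS, ← Matrix.mulVec_mulVec, hCu, Matrix.mulVec_smul]
  have hzeq : A *ᵥ z = μ • (B *ᵥ z) := by rw [hAz, hBz]
  have hu0 : u ≠ 0 := by
    intro h
    apply bas.orthonormal.ne_zero i
    ext k; exact congrFun h k
  have hz0 : z ≠ 0 := by
    intro h
    apply hu0
    rw [← hSz, h, Matrix.mulVec_zero]
  have huu : u ⬝ᵥ u = 1 := by
    have h1 : ‖bas i‖ = 1 := bas.orthonormal.1 i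
    have h2 : (inner ℝ (bas i) (bas i) : ℝ) = ‖bas i‖ * ‖bas i‖ :=
      real_inner_self_eq_norm_mul_norm _
    rw [hinnerdot] at h2
    rw [hu]
    rw [h2, h1, mul_one]
  have hzBz : z ⬝ᵥ B *ᵥ z = 1 := by
    rw [hBz, sdot S hSsym z u, hSz, huu]
  have hzAz : z ⬝ᵥ A *ᵥ z = μ := by
    rw [hzeq, dotProduct_smul, hzBz, smul_eq_mul, mul_one]
  have hdotnn : ∀ w : Fin m → ℝ, 0 ≤ w ⬝ᵥ w := by
    intro w
    have hrfl : w ⬝ᵥ w = ∑ j, w j * w j := rfl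
    rw [hrfl]; exact Finset.sum_nonneg fun j _ => mul_self_nonneg _
  have hzzpos : 0 < z ⬝ᵥ z :=
    lt_of_le_of_ne (hdotnn z) (fun h => hz0 (dotProduct_self_eq_zero.mp h.symm))
  have hμpos : 0 < μ := by
    have h1 := hAlb z
    rw [hzAz] at h1
    have h2 : 0 < δ⁻¹ * (z ⬝ᵥ z) := mul_pos (inv_pos.mpr hδ) hzzpos
    linarith
  have hzzle : z ⬝ᵥ z ≤ δ * μ := by
    have h1 := hAlb z
    rw [hzAz] at h1
    have h2 : δ⁻¹ * (z ⬝ᵥ z) * δ ≤ μ * δ := mul_le_mul_of_nonneg_right h1 hδ.le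
    rw [mul_comm (δ⁻¹) _, mul_assoc, inv_mul_cancel₀ hδ.ne', mul_one] at h2
    linarith [h2]
  -- the coefficient identity
  have hcz : z ⬝ᵥ B *ᵥ v = c i := by
    rw [sdot B hB z v, hBz, ← sdot S hSsym u v]
  -- residual identity
  set r : Fin m → ℝ := (A - lam • B) *ᵥ v with hr
  have hDsym : (A - lam • B).IsSymm := by
    rw [Matrix.IsSymm, Matrix.transpose_sub, Matrix.transpose_smul, hA.eq, hB.eq]
  have hres : z ⬝ᵥ r = (μ - lam) * c i := by
    have h1 : (A - lam • B) *ᵥ z = (μ - lam) • (B *ᵥ z) := by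
      rw [Matrix.sub_mulVec, Matrix.smul_mulVec, hzeq, sub_smul]
    rw [hr, sdot _ hDsym z v, h1, smul_dotProduct, smul_eq_mul, ← hcz, sdot B hB z v]
  -- Cauchy-Schwarz
  have hCS : |z ⬝ᵥ r| ≤ Real.sqrt (z ⬝ᵥ z) * Real.sqrt (r ⬝ᵥ r) := by
    have key : ∀ w w' : Fin m → ℝ,
        w ⬝ᵥ w' ≤ Real.sqrt (w ⬝ᵥ w) * Real.sqrt (w' ⬝ᵥ w') := by
      intro w w'
      have h1 := Real.sum_mul_le_sqrt_mul_sqrt Finset.univ w w'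
      have h2 : w ⬝ᵥ w' = ∑ j, w j * w' j := rfl
      have h3 : w ⬝ᵥ w = ∑ j, w j ^ 2 := by
        simp [dotProduct, sq]
      have h4 : w' ⬝ᵥ w' = ∑ j, w' j ^ 2 := by
        simp [dotProduct, sq]
      rw [h2, h3, h4]; exact h1
    rcases abs_cases (z ⬝ᵥ r) with ⟨h, -⟩ | ⟨h, -⟩
    · rw [h]; exact key z r
    · rw [h]
      have h5 := key (-z) r
      have h6 : (-z) ⬝ᵥ r = -(z ⬝ᵥ r) := by simp
      have h7 : (-z) ⬝ᵥ (-z) = z ⬝ᵥ z := by simp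
      rw [h6, h7] at h5
      exact h5
  have hCS2 : |z ⬝ᵥ r| ≤ Real.sqrt (δ * μ) * Real.sqrt (r ⬝ᵥ r) :=
    hCS.trans (mul_le_mul_of_nonneg_right (Real.sqrt_le_sqrt hzzle) (Real.sqrt_nonneg _))
  -- assemble
  refine ⟨μ, hμpos, z, hz0, hzeq, ?_⟩
  set t : ℝ := v ⬝ᵥ B *ᵥ v with ht
  have htpos : 0 < t := hBv
  have hstpos : 0 < Real.sqrt t := Real.sqrt_pos.mpr htpos
  rw [le_div_iff₀ hstpos]
  have hst : Real.sqrt t ≤ Real.sqrt m * |c i| := by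
    calc Real.sqrt t ≤ Real.sqrt ((m : ℝ) * c i ^ 2) := Real.sqrt_le_sqrt htc
      _ = Real.sqrt m * |c i| := by
        rw [Real.sqrt_mul (Nat.cast_nonneg m), Real.sqrt_sq_eq_abs]
  have habs : |μ - lam| * |c i| ≤ Real.sqrt (δ * μ) * Real.sqrt (r ⬝ᵥ r) := by
    rw [← abs_mul, ← hres]; exact hCS2
  calc |μ - lam| * Real.sqrt t ≤ |μ - lam| * (Real.sqrt m * |c i|) :=
        mul_le_mul_of_nonneg_left hst (abs_nonneg _)
    _ = Real.sqrt m * (|μ - lam| * |c i|) := by ring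
    _ ≤ Real.sqrt m * (Real.sqrt (δ * μ) * Real.sqrt (r ⬝ᵥ r)) :=
        mul_le_mul_of_nonneg_left habs (Real.sqrt_nonneg _)
    _ = Real.sqrt (δ * μ) * Real.sqrt m * Real.sqrt (r ⬝ᵥ r) := by ring
end

section
/- Let m ≥ 1 and let A and B be real symmetric m×m matrices with B positive definite. Assume there is δ > 0 such that xᵀAx ≥ δ⁻¹·xᵀx for every vector x. Let λ > 0, let v be a nonzero vector, set r = (A − λB)v, and write C = √m · ‖r‖ / √(vᵀBv), where ‖·‖ is the Euclidean norm. Then there exist a real number μ > 0 and a nonzero vector z with Az = μBz such that |μ − λ| ≤ max( 2δC², √(2δλ)·C ). -/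
open Matrix
open scoped RealInnerProductSpace
open scoped MatrixOrder

lemma inner_eq_dot {m : ℕ} (a b : EuclideanSpace ℝ (Fin m)) : ⟪a, b⟫ = a ⬝ᵥ b := by
  simp [PiLp.inner_apply, dotProduct]
  exact Finset.sum_congr rfl fun _ _ => mul_comm _ _

lemma symm_dot {m : ℕ} {P : Matrix (Fin m) (Fin m) ℝ} (hP : P.IsSymm) (a b : Fin m → ℝ) :
    (P *ᵥ a) ⬝ᵥ b = a ⬝ᵥ (P *ᵥ b) := by
  rw [dotProduct_mulVec, ← mulVec_transpose, hP.eq, dotProduct_comm, dotProduct_mulVec,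
    ← mulVec_transpose, hP.eq, dotProduct_comm]

lemma symm_to_herm {m : ℕ} {P : Matrix (Fin m) (Fin m) ℝ} (hP : P.IsSymm) : P.IsHermitian := by
  ext i j
  rw [conjTranspose_apply, hP.apply, star_trivial]

lemma dot_self_pos {m : ℕ} {x : Fin m → ℝ} (hx : x ≠ 0) : 0 < x ⬝ᵥ x := by
  have := Matrix.dotProduct_star_self_pos_iff (v := x)
  simpa using this.mpr hx

lemma arith_endgame (δ lam μ D RR mm C : ℝ) (hδ : 0 < δ) (hlam : 0 < lam) (hμ : 0 < μ)
    (hD : 0 < D) (hRR : 0 ≤ RR) (hmm : 1 ≤ mm)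
    (hC : C = Real.sqrt mm * Real.sqrt RR / Real.sqrt D)
    (hkey : (μ - lam) ^ 2 / μ * D ≤ δ * RR) :
    |μ - lam| ≤ max (2 * δ * C ^ 2) (Real.sqrt (2 * δ * lam) * C) := by
  have hC0 : 0 ≤ C := by rw [hC]; positivity
  have hmm0 : (0:ℝ) ≤ mm := by linarith
  have hCsq : C ^ 2 = mm * RR / D := by
    rw [hC, div_pow, mul_pow, Real.sq_sqrt hmm0, Real.sq_sqrt hRR, Real.sq_sqrt hD.le]
  have hrrC : RR ≤ C ^ 2 * D := by
    have hCD : C ^ 2 * D = mm * RR := by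
      rw [hCsq]; field_simp
    rw [hCD]; nlinarith
  have hkey2 : (μ - lam) ^ 2 ≤ δ * μ * C ^ 2 := by
    have h1 : (μ - lam) ^ 2 / μ * D ≤ δ * (C ^ 2 * D) :=
      hkey.trans (mul_le_mul_of_nonneg_left hrrC hδ.le)
    have h2 : (μ - lam) ^ 2 / μ ≤ δ * C ^ 2 :=
      le_of_mul_le_mul_right (by linarith [h1]) hD
    calc (μ - lam) ^ 2 = (μ - lam) ^ 2 / μ * μ := by field_simp
      _ ≤ δ * C ^ 2 * μ := mul_le_mul_of_nonneg_right h2 hμ.le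
      _ = δ * μ * C ^ 2 := by ring
  rcases le_or_gt μ (2 * lam) with hcase | hcase
  · refine le_max_of_le_right ?_
    have h1 : (μ - lam) ^ 2 ≤ 2 * δ * lam * C ^ 2 := by nlinarith [sq_nonneg C]
    calc |μ - lam| = Real.sqrt ((μ - lam) ^ 2) := (Real.sqrt_sq_eq_abs _).symm
      _ ≤ Real.sqrt (2 * δ * lam * C ^ 2) := Real.sqrt_le_sqrt h1
      _ = Real.sqrt (2 * δ * lam) * C := by
          rw [Real.sqrt_mul (by positivity), Real.sqrt_sq hC0]
  · refine le_max_of_le_left ?_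
    have habs : |μ - lam| = μ - lam := abs_of_pos (by linarith)
    rw [habs]
    nlinarith [sq_nonneg C]

/-- if A, B are real symmetric m×m matrices (m ≥ 1), B positive definite, and
xᵀAx ≥ δ⁻¹·xᵀx for all x (δ > 0), then for λ > 0 and nonzero v, with r = (A − λB)v and
C = √m·‖r‖/√(vᵀBv), there is a generalized eigenpair Az = μBz with μ > 0, z ≠ 0 and
|μ − λ| ≤ max(2δC², √(2δλ)·C). -/
theorem generalized_eigenvalue_perturbation_refined (m : ℕ) (hm : 1 ≤ m)
    (A B : Matrix (Fin m) (Fin m) ℝ) (hA : A.IsSymm) (hB : B.IsSymm) (hBpd : B.PosDef)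
    (δ : ℝ) (hδ : 0 < δ)
    (hAlb : ∀ x : Fin m → ℝ, δ⁻¹ * (x ⬝ᵥ x) ≤ x ⬝ᵥ A.mulVec x)
    (lam : ℝ) (hlam : 0 < lam) (v : Fin m → ℝ) (hv : v ≠ 0) :
    ∃ μ : ℝ, 0 < μ ∧ ∃ z : Fin m → ℝ, z ≠ 0 ∧ A.mulVec z = μ • B.mulVec z ∧
      |μ - lam| ≤
        max (2 * δ * (Real.sqrt m *
              Real.sqrt (((A - lam • B).mulVec v) ⬝ᵥ ((A - lam • B).mulVec v)) /
                Real.sqrt (v ⬝ᵥ B.mulVec v)) ^ 2)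
          (Real.sqrt (2 * δ * lam) * (Real.sqrt m *
              Real.sqrt (((A - lam • B).mulVec v) ⬝ᵥ ((A - lam • B).mulVec v)) /
                Real.sqrt (v ⬝ᵥ B.mulVec v))) := by
  classical
  set r : Fin m → ℝ := (A - lam • B).mulVec v with hr
  set D : ℝ := v ⬝ᵥ B.mulVec v with hD
  set C : ℝ := Real.sqrt m * Real.sqrt (r ⬝ᵥ r) / Real.sqrt D with hC
  have hD0 : 0 < D := by simpa using hBpd.dotProduct_mulVec_pos hv
  have hC0 : 0 ≤ C := by positivity
  have hrr0 : 0 ≤ r ⬝ᵥ r := by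
    simpa [dotProduct] using Finset.sum_nonneg fun i (_ : i ∈ Finset.univ) => mul_self_nonneg (r i)
  -- A is positive definite
  have hAh : A.IsHermitian := symm_to_herm hA
  have hApd : A.PosDef := by
    refine PosDef.of_dotProduct_mulVec_pos hAh fun x hx => ?_
    have h1 : 0 < δ⁻¹ * (x ⬝ᵥ x) := by
      have := dot_self_pos hx
      positivity
    simpa using h1.trans_le (hAlb x)
  -- square root of B
  set S : Matrix (Fin m) (Fin m) ℝ := CFC.sqrt B with hS
  have hSsq : S * S = B := CFC.sqrt_mul_sqrt_self B hBpd.posSemidef.nonneg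
  have hSh : S.IsHermitian := (CFC.sqrt_nonneg B).posSemidef.isHermitian
  have hSsymm : S.IsSymm := by
    show Sᵀ = S
    rw [← conjTranspose_eq_transpose_of_trivial, hSh.eq]
  have hSunit : IsUnit S.det := by
    have hBdet : B.det ≠ 0 := hBpd.det_pos.ne'
    rw [← hSsq, det_mul] at hBdet
    exact (IsUnit.mul_iff.mp (Ne.isUnit hBdet)).1
  have hSS : S * S⁻¹ = 1 := mul_nonsing_inv S hSunit
  have hSS' : S⁻¹ * S = 1 := nonsing_inv_mul S hSunit
  have hSinvsymm : (S⁻¹).IsSymm := by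
    show (S⁻¹)ᵀ = S⁻¹
    rw [transpose_nonsing_inv, hSsymm.eq]
  -- the matrix M
  set M : Matrix (Fin m) (Fin m) ℝ := S⁻¹ * A * S⁻¹ with hM
  have hMsymm : M.IsSymm := by
    show Mᵀ = M
    rw [hM, transpose_mul, transpose_mul, hSinvsymm.eq, hA.eq, mul_assoc]
  have hMh : M.IsHermitian := symm_to_herm hMsymm
  have hMpd : M.PosDef := by
    refine PosDef.of_dotProduct_mulVec_pos hMh fun x hx => ?_
    have hy : S⁻¹ *ᵥ x ≠ 0 := by
      intro h
      apply hx
      have hsx : S *ᵥ (S⁻¹ *ᵥ x) = x := by rw [mulVec_mulVec, hSS, one_mulVec]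
      rw [h, mulVec_zero] at hsx; exact hsx.symm
    have h2 := hApd.dotProduct_mulVec_pos hy
    simp only [star_trivial] at h2 ⊢
    calc (0:ℝ) < (S⁻¹ *ᵥ x) ⬝ᵥ A *ᵥ (S⁻¹ *ᵥ x) := h2
      _ = x ⬝ᵥ M *ᵥ x := by
          rw [symm_dot hSinvsymm, hM, ← mulVec_mulVec, ← mulVec_mulVec]
  -- eigen data
  set ev : Fin m → ℝ := hMh.eigenvalues with hev
  have hevpos : ∀ i, 0 < ev i := hMpd.eigenvalues_pos
  set eb := hMh.eigenvectorBasis with heb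
  have hMe : ∀ i, M *ᵥ (eb i : Fin m → ℝ) = ev i • (eb i : Fin m → ℝ) :=
    fun i => hMh.mulVec_eigenvectorBasis i
  -- vectors
  set u : Fin m → ℝ := S *ᵥ v with hu
  set x : Fin m → ℝ := S⁻¹ *ᵥ r with hx
  set w : Fin m → ℝ := S *ᵥ (A⁻¹ *ᵥ r) with hw
  have hu0 : u ≠ 0 := by
    intro h
    apply hv
    have husv : S⁻¹ *ᵥ (S *ᵥ v) = v := by rw [mulVec_mulVec, hSS', one_mulVec]
    rw [← husv, ← hu, h, mulVec_zero]
  have hDu : u ⬝ᵥ u = D := by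
    rw [hu, symm_dot hSsymm, mulVec_mulVec, hSsq, hD]
  -- x = M u - lam u
  have hmatkey : S⁻¹ * (A - lam • B) = M * S - lam • S := by
    rw [hM, mul_sub, mul_assoc (S⁻¹ * A) S⁻¹ S, hSS', mul_one]
    congr 1
    rw [mul_smul_comm, ← hSsq, ← mul_assoc, hSS', one_mul]
  have hxMu : x = M *ᵥ u - lam • u := by
    rw [hx, hr, hu, mulVec_mulVec, hmatkey, sub_mulVec, smul_mulVec, ← mulVec_mulVec]
  -- w satisfies M w = x and x ⬝ᵥ w = r ⬝ᵥ A⁻¹ r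
  have hAunit : IsUnit A.det := hApd.det_pos.ne'.isUnit
  have hAA : A * A⁻¹ = 1 := mul_nonsing_inv A hAunit
  have hMw : M *ᵥ w = x := by
    rw [hw, hx, hM, mulVec_mulVec, mulVec_mulVec, mul_assoc (S⁻¹ * A) S⁻¹ S,
      hSS', mul_one, mul_assoc, hAA, mul_one]
  have hAinvsymm : (A⁻¹).IsSymm := by
    show (A⁻¹)ᵀ = A⁻¹
    rw [transpose_nonsing_inv, hA.eq]
  have hxw : x ⬝ᵥ w = r ⬝ᵥ (A⁻¹ *ᵥ r) := by
    rw [hx, hw, symm_dot hSinvsymm, mulVec_mulVec, mulVec_mulVec, hSS', one_mul]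
  -- r ⬝ᵥ A⁻¹ r ≤ δ (r ⬝ᵥ r)
  have hresid : r ⬝ᵥ (A⁻¹ *ᵥ r) ≤ δ * (r ⬝ᵥ r) := by
    set y : Fin m → ℝ := A⁻¹ *ᵥ r with hy
    have hAy : A *ᵥ y = r := by rw [hy, mulVec_mulVec, hAA, one_mulVec]
    have h1 : r ⬝ᵥ y = y ⬝ᵥ r := dotProduct_comm _ _
    have h2 : y ⬝ᵥ r = y ⬝ᵥ (A *ᵥ y) := by rw [hAy]
    have h3 : δ⁻¹ * (y ⬝ᵥ y) ≤ y ⬝ᵥ (A *ᵥ y) := hAlb y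
    have hyy0 : 0 ≤ y ⬝ᵥ y := by
      simpa [dotProduct] using Finset.sum_nonneg fun i (_ : i ∈ Finset.univ) => mul_self_nonneg (y i)
    have hcs : (y ⬝ᵥ r) ^ 2 ≤ (y ⬝ᵥ y) * (r ⬝ᵥ r) := by
      simpa [dotProduct, sq] using Finset.sum_mul_sq_le_sq_mul_sq Finset.univ y r
    have ht0 : 0 ≤ y ⬝ᵥ r := by
      rw [h2]
      calc (0:ℝ) ≤ δ⁻¹ * (y ⬝ᵥ y) := by positivity
        _ ≤ _ := h3
    have h4 : (y ⬝ᵥ y) ≤ δ * (y ⬝ᵥ (A *ᵥ y)) := by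
      have h5 := mul_le_mul_of_nonneg_left h3 hδ.le
      rwa [← mul_assoc, mul_inv_cancel₀ hδ.ne', one_mul] at h5
    have h6 : (y ⬝ᵥ (A *ᵥ y)) ^ 2 ≤ (δ * (y ⬝ᵥ (A *ᵥ y))) * (r ⬝ᵥ r) := by
      calc (y ⬝ᵥ (A *ᵥ y)) ^ 2 = (y ⬝ᵥ r) ^ 2 := by rw [h2]
        _ ≤ (y ⬝ᵥ y) * (r ⬝ᵥ r) := hcs
        _ ≤ _ := mul_le_mul_of_nonneg_right h4 hrr0
    rw [h1, h2]
    rcases eq_or_lt_of_le (ht0.trans_eq h2) with hteq | htpos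
    · rw [← hteq]
      positivity
    · nlinarith [h6, htpos]
  -- Parseval via the eigenbasis
  set c : Fin m → ℝ := fun i => (eb i : Fin m → ℝ) ⬝ᵥ u with hc
  have parseval : ∀ a b : Fin m → ℝ,
      a ⬝ᵥ b = ∑ i, ((eb i : Fin m → ℝ) ⬝ᵥ a) * ((eb i : Fin m → ℝ) ⬝ᵥ b) := by
    intro a b
    have hp := eb.sum_inner_mul_inner (WithLp.toLp 2 a)
      (WithLp.toLp 2 b)
    rw [inner_eq_dot] at hp
    simp only [WithLp.ofLp_toLp] at hp
    rw [← hp]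
    congr 1
    funext i
    rw [real_inner_comm, inner_eq_dot, inner_eq_dot]
  have hex : ∀ i, (eb i : Fin m → ℝ) ⬝ᵥ x = (ev i - lam) * c i := by
    intro i
    rw [hxMu, dotProduct_sub, ← symm_dot hMsymm, hMe i, smul_dotProduct, dotProduct_smul]
    simp only [smul_eq_mul]
    ring
  have hew : ∀ i, (eb i : Fin m → ℝ) ⬝ᵥ w = (ev i - lam) * c i / ev i := by
    intro i
    have h1 : ev i * ((eb i : Fin m → ℝ) ⬝ᵥ w) = (ev i - lam) * c i := by
      calc ev i * ((eb i : Fin m → ℝ) ⬝ᵥ w) = (ev i • (eb i : Fin m → ℝ)) ⬝ᵥ w := by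
            rw [smul_dotProduct]; rfl
        _ = (M *ᵥ (eb i : Fin m → ℝ)) ⬝ᵥ w := by rw [hMe i]
        _ = (eb i : Fin m → ℝ) ⬝ᵥ (M *ᵥ w) := symm_dot hMsymm _ _
        _ = (eb i : Fin m → ℝ) ⬝ᵥ x := by rw [hMw]
        _ = (ev i - lam) * c i := hex i
    rw [eq_div_iff (hevpos i).ne']
    linarith [h1]
  have hDsum : D = ∑ i, c i ^ 2 := by
    rw [← hDu, parseval u u]
    congr 1; funext i; rw [sq]
  have hxwsum : x ⬝ᵥ w = ∑ i, (ev i - lam) ^ 2 / ev i * c i ^ 2 := by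
    rw [parseval x w]
    congr 1; funext i
    rw [hex i, hew i]
    field_simp
  -- choose the minimizing eigenvalue
  have hne : (Finset.univ : Finset (Fin m)).Nonempty := ⟨⟨0, hm⟩, Finset.mem_univ _⟩
  obtain ⟨i₀, -, hmin⟩ := Finset.exists_min_image Finset.univ
    (fun i => (ev i - lam) ^ 2 / ev i) hne
  set μ : ℝ := ev i₀ with hμ
  have hμpos : 0 < μ := hevpos i₀
  -- the key residual inequality
  have hkey : (μ - lam) ^ 2 / μ * D ≤ δ * (r ⬝ᵥ r) := by
    calc (μ - lam) ^ 2 / μ * D = ∑ i, (μ - lam) ^ 2 / μ * c i ^ 2 := by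
          rw [hDsum, Finset.mul_sum]
      _ ≤ ∑ i, (ev i - lam) ^ 2 / ev i * c i ^ 2 :=
          Finset.sum_le_sum fun i _ =>
            mul_le_mul_of_nonneg_right (hmin i (Finset.mem_univ i)) (sq_nonneg _)
      _ = x ⬝ᵥ w := hxwsum.symm
      _ = r ⬝ᵥ (A⁻¹ *ᵥ r) := hxw
      _ ≤ δ * (r ⬝ᵥ r) := hresid
  -- the eigenvector z
  refine ⟨μ, hμpos, S⁻¹ *ᵥ (eb i₀ : Fin m → ℝ), ?_, ?_, ?_⟩
  · intro h
    have he0 : (eb i₀ : Fin m → ℝ) = S *ᵥ (S⁻¹ *ᵥ (eb i₀ : Fin m → ℝ)) := by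
      rw [mulVec_mulVec, hSS, one_mulVec]
    rw [h, mulVec_zero] at he0
    exact eb.orthonormal.ne_zero i₀ (by ext j; exact congrFun he0 j)
  · have h1 : S *ᵥ (M *ᵥ (eb i₀ : Fin m → ℝ)) = S *ᵥ (μ • (eb i₀ : Fin m → ℝ)) := by
      rw [hMe i₀]
    rw [mulVec_mulVec, mulVec_smul] at h1
    have h2 : S * M = A * S⁻¹ := by
      rw [hM, ← mul_assoc, ← mul_assoc, hSS, one_mul]
    rw [h2] at h1
    have h3 : B *ᵥ (S⁻¹ *ᵥ (eb i₀ : Fin m → ℝ)) = S *ᵥ (eb i₀ : Fin m → ℝ) := by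
      rw [mulVec_mulVec, ← hSsq, mul_assoc, hSS, mul_one]
    rw [h3, mulVec_mulVec]
    exact h1
  · -- the numerical bound
    clear_value S M ev eb u x w c μ
    exact arith_endgame δ lam μ D (r ⬝ᵥ r) m C hδ hlam hμpos hD0 hrr0
      (by exact_mod_cast hm) hC hkey
end
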